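/- Let T ≥ 1 be a natural number, C a real, D ≥ 0 a real, and q, c : ℕ → ℝ with q(0) ≥ 0 and q(t+1) = max(0, q(t) + c(t) - C/T) for all t. If q(t+1)^2 - q(t)^2 ≤ 2·D for every t < T, then (1/T)·∑_{t=0}^{T-1} c(t) - C/T ≤ sqrt( q(0)^2/T^2 + 2·D/T ) - q(0)/T. -/

import Mathlib

/-- Core of Theorem 1: with the virtual-queue update `q(t+1) = max(0, q(t) + c(t) - C/T)`,
a per-slot drift bound `q(t+1)² - q(t)² ≤ 2D` implies the budget-violation bound
`(1/T)·∑_{t<T} c(t) - C/T ≤ sqrt(q(0)²/T² + 2D/T) - q(0)/T`. -/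
theorem budget_violation_bound (T : ℕ) (hT : 1 ≤ T) (C D : ℝ) (hD : 0 ≤ D)
    (q c : ℕ → ℝ) (hq0 : 0 ≤ q 0)
    (hdyn : ∀ t, q (t + 1) = max 0 (q t + c t - C / T))
    (hdrift : ∀ t < T, q (t + 1) ^ 2 - q t ^ 2 ≤ 2 * D) :
    (1 / T) * ∑ t ∈ Finset.range T, c t - C / T
      ≤ Real.sqrt (q 0 ^ 2 / T ^ 2 + 2 * D / T) - q 0 / T := by
  have hTpos : (0:ℝ) < T := by exact_mod_cast hT
  -- q(T) ≥ q(0) + ∑ c - C, by telescoping q(t+1) ≥ q t + c t - C/T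
  have hlow : q 0 + (∑ t ∈ Finset.range T, c t - T * (C / T)) ≤ q T := by
    have : ∀ n, q 0 + (∑ t ∈ Finset.range n, c t - n * (C / T)) ≤ q n := by
      intro n
      induction n with
      | zero => simp
      | succ n ih =>
        have hstep : q n + c n - C / T ≤ q (n + 1) := by
          rw [hdyn n]; exact le_max_right _ _
        rw [Finset.sum_range_succ]
        push_cast
        nlinarith
    exact this T
  -- q(T)² ≤ q(0)² + T·2D by telescoping the drift bound
  have hsq : q T ^ 2 ≤ q 0 ^ 2 + T * (2 * D) := by
    have : ∀ n ≤ T, q n ^ 2 ≤ q 0 ^ 2 + n * (2 * D) := by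
      intro n hn
      induction n with
      | zero => simp
      | succ n ih =>
        have hn' : n < T := hn
        have := hdrift n hn'
        have := ih (le_of_lt hn')
        push_cast
        nlinarith
    exact this T le_rfl
  have hqT : 0 ≤ q T := by
    cases T with
    | zero => exact hq0
    | succ n => rw [hdyn n]; exact le_max_left _ _
  have hRHS : 0 ≤ q 0 ^ 2 + T * (2 * D) := by positivity
  have hqTle : q T ≤ Real.sqrt (q 0 ^ 2 + T * (2 * D)) := by
    rw [show q T = Real.sqrt (q T ^ 2) from (Real.sqrt_sq hqT).symm]
    exact Real.sqrt_le_sqrt hsq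
  -- combine
  have hcancel : (T:ℝ) * (C / T) = C := by field_simp
  have hsum : ∑ t ∈ Finset.range T, c t ≤ Real.sqrt (q 0 ^ 2 + T * (2 * D)) - q 0 + C := by
    rw [hcancel] at hlow; linarith
  have hsqrt_div : Real.sqrt (q 0 ^ 2 + T * (2 * D)) / T
      = Real.sqrt (q 0 ^ 2 / T ^ 2 + 2 * D / T) := by
    rw [show (T:ℝ) = Real.sqrt (T^2) from (Real.sqrt_sq hTpos.le).symm,
      ← Real.sqrt_div' _ (by positivity)]
    congr 1
    field_simp
    rw [Real.sqrt_sq hTpos.le]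
  have h1 : (1 / T) * ∑ t ∈ Finset.range T, c t
      ≤ (Real.sqrt (q 0 ^ 2 + T * (2 * D)) - q 0 + C) / T := by
    rw [one_div, inv_mul_eq_div]
    gcongr
  calc (1 / T) * ∑ t ∈ Finset.range T, c t - C / T
      ≤ (Real.sqrt (q 0 ^ 2 + T * (2 * D)) - q 0 + C) / T - C / T := by linarith
    _ = Real.sqrt (q 0 ^ 2 + T * (2 * D)) / T - q 0 / T := by ring
    _ = Real.sqrt (q 0 ^ 2 / T ^ 2 + 2 * D / T) - q 0 / T := by rw [hsqrt_div]
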